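/- arXiv:2312.16742 — 2 statements merged into one kernel-verified Lean document; each statement's English description precedes it below -/
import Mathlib

section
/- For every integer τ₂ ≥ 3, setting v₁(τ₂) = (τ₂-1)³ + (τ₂-1)(3⌊(τ₂-1)/2⌋+1) - ⌊(τ₂-1)/2⌋² and v₂(τ₂) = v₁(τ₂) - (τ₂-1-⌊(τ₂-1)/2⌋)³, one has p(τ₂) := v₂(τ₂)/(τ₂³ - (v₁(τ₂) - v₂(τ₂))) > 1/2. -/
theorem stmt3 (τ₂ : ℤ) (h : 3 ≤ τ₂) (k v₁ v₂ : ℤ) (hk : k = (τ₂ - 1) / 2)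
    (hv₁ : v₁ = (τ₂ - 1) ^ 3 + (τ₂ - 1) * (3 * k + 1) - k ^ 2)
    (hv₂ : v₂ = v₁ - (τ₂ - 1 - k) ^ 3) :
    (v₂ : ℝ) / ((τ₂ : ℝ) ^ 3 - ((v₁ - v₂ : ℤ) : ℝ)) > 1 / 2 := by
  have hD : (0 : ℤ) < τ₂ ^ 3 - (v₁ - v₂) ∧ τ₂ ^ 3 - (v₁ - v₂) < 2 * v₂ := by
    rcases Int.even_or_odd τ₂ with ⟨m, hm⟩ | ⟨m, hm⟩
    · have hk' : k = m - 1 := by omega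
      have hm2 : 2 ≤ m := by omega
      subst hv₂ hv₁ hk' hm
      have e1 : 0 ≤ m * (m * (m - 2)) := by
        have : 0 ≤ m - 2 := by omega
        have : 0 ≤ m := by omega
        positivity
      have e2 : 0 ≤ m * (m - 2) := mul_nonneg (by omega) (by omega)
      constructor <;> nlinarith [e1, e2, hm2]
    · have hk' : k = m := by omega
      have hm1 : 1 ≤ m := by omega
      subst hv₂ hv₁ hk' hm
      have e1 : 0 ≤ k * (k * (k - 1)) := mul_nonneg (by omega) (mul_nonneg (by omega) (by omega))
      have e2 : 0 ≤ k * (k - 1) := mul_nonneg (by omega) (by omega)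
      constructor <;> nlinarith [e1, e2, hm1]
  obtain ⟨h1, h2⟩ := hD
  have h1' : (0 : ℝ) < (τ₂ : ℝ) ^ 3 - ((v₁ - v₂ : ℤ) : ℝ) := by exact_mod_cast h1
  rw [gt_iff_lt, div_lt_div_iff₀ (by norm_num) h1']
  have h2' : ((τ₂ ^ 3 - (v₁ - v₂) : ℤ) : ℝ) < ((2 * v₂ : ℤ) : ℝ) := by exact_mod_cast h2
  push_cast at h2' ⊢
  linarith
end

section
/- Define S(n) = E₁(n) + E₂(n) + E₃(n) + 3c₂(n), where, with k = ⌊(n-1)/2⌋, p ∈ (1/2, 1) any real with p > 1/2 (and p > 2/3 for n ≥ 5), c₁ - c₂ = 2 - (k+1)/n, c₂ = -(1 - k/n), E₁ = p(2 - (k+1)/n), E₂ = (c₁-c₂)·(1/n)(p(n-1-k)+k), E₃ = (c₁-c₂)·(1/n²)(p((n-1)² - k(2(n-1)-k)) + k(2n-1-k)). Then S(n) > 0 for every integer n ≥ 3. -/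
theorem stmt9 (n : ℤ) (hn : 3 ≤ n) (k : ℤ) (hk : k = (n - 1) / 2)
    (p : ℝ) (hp : 1 / 2 < p) (hp1 : p < 1) (hp5 : 5 ≤ n → 2 / 3 < p) :
    p * (2 - ((k : ℝ) + 1) / (n : ℝ))
      + (2 - ((k : ℝ) + 1) / (n : ℝ)) * (1 / (n : ℝ))
          * (p * ((n : ℝ) - 1 - (k : ℝ)) + (k : ℝ))
      + (2 - ((k : ℝ) + 1) / (n : ℝ)) * (1 / (n : ℝ) ^ 2)
          * (p * (((n : ℝ) - 1) ^ 2 - (k : ℝ) * (2 * ((n : ℝ) - 1) - (k : ℝ)))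
              + (k : ℝ) * (2 * (n : ℝ) - 1 - (k : ℝ)))
      + 3 * (-(1 - (k : ℝ) / (n : ℝ))) > 0 := by
  rcases Int.even_or_odd n with ⟨m, hm⟩ | ⟨m, hm⟩
  · -- n = 2m even, k = m - 1, m ≥ 2
    have hkm : k = m - 1 := by omega
    have hm2 : 2 ≤ m := by omega
    have hnr : (n : ℝ) = 2 * (m : ℝ) := by push_cast [hm]; ring
    have hkr : (k : ℝ) = (m : ℝ) - 1 := by push_cast [hkm]; ring
    have hmr : (2 : ℝ) ≤ (m : ℝ) := by exact_mod_cast hm2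
    have hm0' : (0 : ℝ) < (m : ℝ) := by linarith
    rw [hnr, hkr]
    have key : p * (2 - ((m : ℝ) - 1 + 1) / (2 * (m : ℝ)))
        + (2 - ((m : ℝ) - 1 + 1) / (2 * (m : ℝ))) * (1 / (2 * (m : ℝ)))
            * (p * (2 * (m : ℝ) - 1 - ((m : ℝ) - 1)) + ((m : ℝ) - 1))
        + (2 - ((m : ℝ) - 1 + 1) / (2 * (m : ℝ))) * (1 / (2 * (m : ℝ)) ^ 2)
            * (p * ((2 * (m : ℝ) - 1) ^ 2 - ((m : ℝ) - 1) * (2 * (2 * (m : ℝ) - 1) - ((m : ℝ) - 1)))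
                + ((m : ℝ) - 1) * (2 * (2 * (m : ℝ)) - 1 - ((m : ℝ) - 1)))
        + 3 * (-(1 - ((m : ℝ) - 1) / (2 * (m : ℝ))))
      = (p * 21 * (m : ℝ) ^ 3 + 3 * (m : ℝ) ^ 3 - 27 * (m : ℝ) ^ 2) / (8 * (m : ℝ) ^ 3) := by
      have hm0 : (m : ℝ) ≠ 0 := ne_of_gt hm0'
      field_simp
      ring
    rw [gt_iff_lt, key]
    apply div_pos _ (by positivity)
    rcases eq_or_lt_of_le hm2 with h2 | h3
    · have : (m : ℝ) = 2 := by exact_mod_cast h2.symm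
      rw [this]; nlinarith [hp]
    · have hmr3 : (3 : ℝ) ≤ (m : ℝ) := by exact_mod_cast h3
      have hp' : 2 / 3 < p := hp5 (by omega)
      nlinarith [mul_pos (mul_pos (sub_pos.mpr hp') hm0') hm0',
        mul_pos (mul_pos (mul_pos (sub_pos.mpr hp') hm0') hm0') hm0',
        sq_nonneg ((m : ℝ) - 3)]
  · -- n = 2m+1 odd, k = m, m ≥ 1
    have hkm : k = m := by omega
    have hm1 : 1 ≤ m := by omega
    have hnr : (n : ℝ) = 2 * (m : ℝ) + 1 := by push_cast [hm]; ring
    have hkr : (k : ℝ) = (m : ℝ) := by exact_mod_cast congrArg (Int.cast : ℤ → ℝ) hkm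
    have hmr : (1 : ℝ) ≤ (m : ℝ) := by exact_mod_cast hm1
    have hm0' : (0 : ℝ) < 2 * (m : ℝ) + 1 := by linarith
    rw [hnr, hkr]
    have key : p * (2 - ((m : ℝ) + 1) / (2 * (m : ℝ) + 1))
        + (2 - ((m : ℝ) + 1) / (2 * (m : ℝ) + 1)) * (1 / (2 * (m : ℝ) + 1))
            * (p * (2 * (m : ℝ) + 1 - 1 - (m : ℝ)) + (m : ℝ))
        + (2 - ((m : ℝ) + 1) / (2 * (m : ℝ) + 1)) * (1 / (2 * (m : ℝ) + 1) ^ 2)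
            * (p * ((2 * (m : ℝ) + 1 - 1) ^ 2 - (m : ℝ) * (2 * (2 * (m : ℝ) + 1 - 1) - (m : ℝ)))
                + (m : ℝ) * (2 * (2 * (m : ℝ) + 1) - 1 - (m : ℝ)))
        + 3 * (-(1 - (m : ℝ) / (2 * (m : ℝ) + 1)))
      = (p * (21 * (m : ℝ) ^ 3 + 22 * (m : ℝ) ^ 2 + 8 * (m : ℝ) + 1)
          + 3 * (m : ℝ) ^ 3 - 13 * (m : ℝ) ^ 2 - 13 * (m : ℝ) - 3) / (2 * (m : ℝ) + 1) ^ 3 := by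
      have hm0 : (2 * (m : ℝ) + 1) ≠ 0 := ne_of_gt hm0'
      field_simp
      ring
    rw [gt_iff_lt, key]
    apply div_pos _ (by positivity)
    rcases eq_or_lt_of_le hm1 with h1 | h2
    · have : (m : ℝ) = 1 := by exact_mod_cast h1.symm
      rw [this]; nlinarith [hp]
    · have hmr2 : (2 : ℝ) ≤ (m : ℝ) := by exact_mod_cast h2
      have hp' : 2 / 3 < p := hp5 (by omega)
      have hmp : (0 : ℝ) < (m : ℝ) := by linarith
      nlinarith [mul_pos (mul_pos (sub_pos.mpr hp') hmp) hmp,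
        mul_pos (mul_pos (mul_pos (sub_pos.mpr hp') hmp) hmp) hmp,
        sq_nonneg ((m : ℝ) - 2)]
end
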